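/- Let S be a nonempty set, K a positive integer, and for each k ∈ {1, …, K} let G_k : S → ℝ with G_k(x) ≥ 0 and I_k : S → ℝ with I_k(x) > 0 for all x ∈ S. Define g(x, y) = Σ_{k=1}^K (2 y_k √(G_k(x)) − y_k² I_k(x)) for x ∈ S and y ∈ ℝ^K. Then for every x ∈ S, the supremum of g(x, y) over y ∈ ℝ^K equals Σ_{k=1}^K G_k(x)/I_k(x), attained at y_k = √(G_k(x))/I_k(x); consequently sup_{x ∈ S, y ∈ ℝ^K} g(x, y) = sup_{x ∈ S} Σ_{k=1}^K G_k(x)/I_k(x), and x* attains the supremum of the sum of ratios over S if and only if (x*, y*) with y*_k = √(G_k(x*))/I_k(x*) attains the supremum of g over S × ℝ^K. -/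

import Mathlib

/-- Sum-of-ratios quadratic transform: for every `x`, the supremum over `y ∈ ℝᴷ` of
`g(x,y) = Σ_k (2 y_k √(G_k(x)) − y_k² I_k(x))` equals `Σ_k G_k(x)/I_k(x)`, attained at
`y_k = √(G_k(x))/I_k(x)`; hence the joint suprema coincide and `x*` maximizes the sum of
ratios iff `(x*, y*)` maximizes `g`. -/
theorem stmt_5 {S : Type*} [Nonempty S] {K : ℕ} (hK : 0 < K)
    (G I : Fin K → S → ℝ) (hG : ∀ k x, 0 ≤ G k x) (hI : ∀ k x, 0 < I k x)
    (g : S → (Fin K → ℝ) → ℝ)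
    (hg : ∀ x y, g x y = ∑ k, (2 * y k * Real.sqrt (G k x) - y k ^ 2 * I k x)) :
    (∀ x : S, g x (fun k => Real.sqrt (G k x) / I k x) = ∑ k, G k x / I k x) ∧
    (∀ (x : S) (y : Fin K → ℝ), g x y ≤ ∑ k, G k x / I k x) ∧
    sSup {r : ℝ | ∃ (x : S) (y : Fin K → ℝ), r = g x y}
      = sSup {r : ℝ | ∃ x : S, r = ∑ k, G k x / I k x} ∧
    (∀ xs : S, (∀ x : S, (∑ k, G k x / I k x) ≤ ∑ k, G k xs / I k xs) ↔
      (∀ (x : S) (y : Fin K → ℝ),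
        g x y ≤ g xs (fun k => Real.sqrt (G k xs) / I k xs))) := by
  have heq : ∀ x : S, g x (fun k => Real.sqrt (G k x) / I k x) = ∑ k, G k x / I k x := by
    intro x
    rw [hg]
    refine Finset.sum_congr rfl fun k _ => ?_
    have hI' := (hI k x).ne'
    have hs : Real.sqrt (G k x) * Real.sqrt (G k x) = G k x :=
      Real.mul_self_sqrt (hG k x)
    field_simp
    linear_combination hs
  have hle : ∀ (x : S) (y : Fin K → ℝ), g x y ≤ ∑ k, G k x / I k x := by
    intro x y
    rw [hg]
    refine Finset.sum_le_sum fun k _ => ?_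
    have hIk := hI k x
    have hs : Real.sqrt (G k x) * Real.sqrt (G k x) = G k x :=
      Real.mul_self_sqrt (hG k x)
    rw [le_div_iff₀ hIk]
    nlinarith [sq_nonneg (Real.sqrt (G k x) - y k * I k x)]
  refine ⟨heq, hle, ?_, ?_⟩
  · set A := {r : ℝ | ∃ (x : S) (y : Fin K → ℝ), r = g x y}
    set B := {r : ℝ | ∃ x : S, r = ∑ k, G k x / I k x}
    have hBA : B ⊆ A := by
      rintro r ⟨x, rfl⟩
      exact ⟨x, _, (heq x).symm⟩
    have hAB : ∀ a ∈ A, ∃ b ∈ B, a ≤ b := by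
      rintro a ⟨x, y, rfl⟩
      exact ⟨_, ⟨x, rfl⟩, hle x y⟩
    have hBne : B.Nonempty := ⟨_, Classical.arbitrary S, rfl⟩
    by_cases hbdd : BddAbove B
    · have hbddA : BddAbove A := by
        obtain ⟨M, hM⟩ := hbdd
        exact ⟨M, fun a ha => by
          obtain ⟨b, hb, hab⟩ := hAB a ha
          exact hab.trans (hM hb)⟩
      refine le_antisymm ?_ (csSup_le_csSup hbddA hBne hBA)
      refine csSup_le (hBne.mono hBA) fun a ha => ?_
      obtain ⟨b, hb, hab⟩ := hAB a ha
      exact hab.trans (le_csSup hbdd hb)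
    · have hbddA : ¬ BddAbove A := fun h => hbdd (h.mono hBA)
      rw [Real.sSup_of_not_bddAbove hbdd, Real.sSup_of_not_bddAbove hbddA]
  · intro xs
    constructor
    · intro h x y
      rw [heq xs]
      exact (hle x y).trans (h x)
    · intro h x
      rw [← heq x, ← heq xs]
      exact h x _
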